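/- Let R = ℂ[x,y,z,w]/(x³+y³+z³+w³) with its standard grading. Every ℂ-linear derivation δ : R → R that is homogeneous of some negative degree (i.e., δ(R_d) ⊆ R_{d+e} for all d, for some fixed integer e < 0) is zero. -/

import Mathlib

open MvPolynomial

/-- A `k`-linear map `δ : R → R` is a differential operator of order at most `n`:
order `≤ 0` means `δ (r * s) = r * δ s` for all `r s`, and order `≤ n + 1` means all
commutators `[δ, μ_r]` with multiplication operators have order `≤ n`. -/
def IsDiffOpOfOrder (k : Type*) {R : Type*} [CommRing k] [CommRing R] [Algebra k R] :
    ℕ → (R →ₗ[k] R) → Prop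
  | 0 => fun δ => ∀ r s : R, δ (r * s) = r * δ s
  | n + 1 => fun δ => ∀ r : R,
      IsDiffOpOfOrder k n (δ ∘ₗ LinearMap.mulLeft k r - LinearMap.mulLeft k r ∘ₗ δ)

/-- `δ` is homogeneous of degree `e ∈ ℤ` with respect to the grading `𝒜`: it sends
elements of degree `d` to elements of degree `d + e`, interpreted as `0` when `d + e < 0`. -/
def HomogeneousOfDegree {k R : Type*} [CommRing k] [CommRing R] [Algebra k R]
    (𝒜 : ℕ → Submodule k R) (δ : R →ₗ[k] R) (e : ℤ) : Prop :=
  ∀ (d : ℕ), ∀ r ∈ 𝒜 d,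
    (∀ m : ℕ, (m : ℤ) = (d : ℤ) + e → δ r ∈ 𝒜 m) ∧ ((d : ℤ) + e < 0 → δ r = 0)

/-- The grading induced on a quotient of a polynomial ring by a (homogeneous) ideal:
the degree-`d` piece is the image of the degree-`d` homogeneous polynomials. -/
noncomputable def quotGrade {σ : Type*} (k : Type*) [CommRing k]
    (I : Ideal (MvPolynomial σ k)) (d : ℕ) : Submodule k (MvPolynomial σ k ⧸ I) :=
  (MvPolynomial.homogeneousSubmodule σ k d).map (Ideal.Quotient.mkₐ k I).toLinearMap

/-- The Fermat cubic cone. -/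
noncomputable def cubicIdeal : Ideal (MvPolynomial (Fin 4) ℂ) :=
  Ideal.span {X 0 ^ 3 + X 1 ^ 3 + X 2 ^ 3 + X 3 ^ 3}

/-- `R = ℂ[x,y,z,w]/(x³+y³+z³+w³)`. -/
abbrev RCubic : Type := MvPolynomial (Fin 4) ℂ ⧸ cubicIdeal

set_option maxHeartbeats 1000000 in
theorem aux_zero {σ : Type*} (I : Ideal (MvPolynomial σ ℂ))
    (δ : (MvPolynomial σ ℂ ⧸ I) →ₗ[ℂ] (MvPolynomial σ ℂ ⧸ I))
    (hleib : ∀ r s, δ (r * s) = r * δ s + s * δ r)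
    (h1 : δ 1 = 0)
    (hX : ∀ i : σ, δ (Ideal.Quotient.mk I (X i)) = 0) : δ = 0 := by
  ext r
  obtain ⟨p, rfl⟩ := Ideal.Quotient.mk_surjective r
  show δ (Ideal.Quotient.mk I p) = 0
  induction p using MvPolynomial.induction_on with
  | C x =>
      have hx : Ideal.Quotient.mk I (C x) = x • (1 : MvPolynomial σ ℂ ⧸ I) := by
        calc Ideal.Quotient.mk I (C x)
            = Ideal.Quotient.mk I (algebraMap ℂ _ x) := by rw [algebraMap_eq]
          _ = algebraMap ℂ _ x := rfl
          _ = x • 1 := Algebra.algebraMap_eq_smul_one x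
      rw [hx, map_smul, h1, smul_zero]
  | add p q hp hq => rw [map_add, map_add, hp, hq, add_zero]
  | mul_X p i hp => rw [map_mul, hleib, hp, hX i, mul_zero, zero_add, mul_zero]


set_option maxHeartbeats 2000000 in
/-- every ℂ-linear derivation of `R = ℂ[x,y,z,w]/(x³+y³+z³+w³)` that is
homogeneous of some negative degree is zero. -/
theorem no_negative_degree_derivations_fermat_cubic
    (δ : RCubic →ₗ[ℂ] RCubic)
    (hleib : ∀ r s : RCubic, δ (r * s) = r * δ s + s * δ r)
    (e : ℤ) (he : e < 0)
    (hhom : HomogeneousOfDegree (quotGrade ℂ cubicIdeal) δ e) :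
    δ = 0 := by
  have h1 : δ 1 = 0 := by
    have := hleib 1 1
    simp only [one_mul, mul_one] at this
    exact left_eq_add.mp this
  have hcube : ∀ r : RCubic, δ (r ^ 3) = 3 * r ^ 2 * δ r := by
    intro r
    have h2 : δ (r * r) = r * δ r + r * δ r := hleib r r
    have h3 : δ (r * (r * r)) = r * δ (r * r) + (r * r) * δ r := hleib r (r * r)
    have hr3 : r ^ 3 = r * (r * r) := by ring
    rw [hr3, h3, h2]; ring
  have hXmem : ∀ i : Fin 4,
      Ideal.Quotient.mk cubicIdeal (X i) ∈ quotGrade ℂ cubicIdeal 1 :=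
    fun i => ⟨X i, (mem_homogeneousSubmodule _ _).2 (isHomogeneous_X _ _), rfl⟩
  have hF0 : Ideal.Quotient.mk cubicIdeal (X 0 ^ 3 + X 1 ^ 3 + X 2 ^ 3 + X 3 ^ 3) = 0 := by
    rw [Ideal.Quotient.eq_zero_iff_mem]
    exact Ideal.subset_span rfl
  -- δ kills the generators
  have hX : ∀ i : Fin 4, δ (Ideal.Quotient.mk cubicIdeal (X i)) = 0 := by
    rcases lt_or_eq_of_le (show e ≤ -1 by omega) with hlt | heq
    · intro i
      exact (hhom 1 _ (hXmem i)).2 (by omega)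
    · -- e = -1 : δ (X i) is a constant a i
      have hconst : ∀ i : Fin 4, ∃ a : ℂ,
          δ (Ideal.Quotient.mk cubicIdeal (X i)) = Ideal.Quotient.mk cubicIdeal (C a) := by
        intro i
        have hm : δ (Ideal.Quotient.mk cubicIdeal (X i)) ∈ quotGrade ℂ cubicIdeal 0 :=
          (hhom 1 _ (hXmem i)).1 0 (by omega)
        obtain ⟨p, hp, hpe⟩ := hm
        refine ⟨coeff 0 p, ?_⟩
        have hpc : p = C (coeff 0 p) := by
          rw [← homogeneousComponent_zero,
            homogeneousComponent_of_mem (m := 0) hp, if_pos rfl]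
        rw [← hpe, ← hpc]
        rfl
      choose a ha using hconst
      -- the relation forces all a i = 0
      have key : Ideal.Quotient.mk cubicIdeal (C 3 * (C (a 0) * X 0 ^ 2 + C (a 1) * X 1 ^ 2
          + C (a 2) * X 2 ^ 2 + C (a 3) * X 3 ^ 2)) = 0 := by
        have h3 : Ideal.Quotient.mk cubicIdeal (C (3 : ℂ)) = 3 := by
          rw [map_ofNat (C : ℂ →+* MvPolynomial (Fin 4) ℂ), map_ofNat]
        have hFmk : Ideal.Quotient.mk cubicIdeal (X 0 ^ 3 + X 1 ^ 3 + X 2 ^ 3 + X 3 ^ 3)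
            = Ideal.Quotient.mk cubicIdeal (X 0) ^ 3 + Ideal.Quotient.mk cubicIdeal (X 1) ^ 3
            + Ideal.Quotient.mk cubicIdeal (X 2) ^ 3
            + Ideal.Quotient.mk cubicIdeal (X 3) ^ 3 := by
          rw [map_add, map_add, map_add, map_pow, map_pow, map_pow, map_pow]
        have hd : δ (Ideal.Quotient.mk cubicIdeal (X 0) ^ 3
            + Ideal.Quotient.mk cubicIdeal (X 1) ^ 3
            + Ideal.Quotient.mk cubicIdeal (X 2) ^ 3
            + Ideal.Quotient.mk cubicIdeal (X 3) ^ 3) = 0 := by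
          rw [← hFmk, hF0, map_zero]
        rw [map_add, map_add, map_add, hcube, hcube, hcube, hcube,
          ha 0, ha 1, ha 2, ha 3] at hd
        rw [map_mul, map_add, map_add, map_add]
        simp only [map_mul, map_pow]
        rw [h3]
        linear_combination hd
      have hmem : C 3 * (C (a 0) * X 0 ^ 2 + C (a 1) * X 1 ^ 2 + C (a 2) * X 2 ^ 2
          + C (a 3) * X 3 ^ 2) ∈ cubicIdeal := by
        rwa [Ideal.Quotient.eq_zero_iff_mem] at key
      rw [cubicIdeal, Ideal.mem_span_singleton] at hmem
      obtain ⟨c, hc⟩ := hmem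
      have heval : ∀ v0 v1 v2 v3 : ℂ, v0 ^ 3 + v1 ^ 3 + v2 ^ 3 + v3 ^ 3 = 0 →
          3 * (a 0 * v0 ^ 2 + a 1 * v1 ^ 2 + a 2 * v2 ^ 2 + a 3 * v3 ^ 2) = 0 := by
        intro v0 v1 v2 v3 hv
        have h := congrArg (eval ![v0, v1, v2, v3]) hc
        simp only [eval_mul, eval_add, eval_pow, eval_C, eval_X,
          Matrix.cons_val_zero, Matrix.cons_val_one, Matrix.head_cons,
          Matrix.cons_val_two, Matrix.cons_val_three, Matrix.tail_cons] at h
        rw [h, hv]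
        ring
      have e01 := heval 1 (-1) 0 0 (by norm_num)
      have e02 := heval 1 0 (-1) 0 (by norm_num)
      have e12 := heval 0 1 (-1) 0 (by norm_num)
      have e13 := heval 0 1 0 (-1) (by norm_num)
      have ha0 : a 0 = 0 := by linear_combination (e01 + e02 - e12) / 6
      have ha1 : a 1 = 0 := by linear_combination (e01 - e02 + e12) / 6
      have ha2 : a 2 = 0 := by linear_combination (-e01 + e02 + e12) / 6
      have ha3 : a 3 = 0 := by linear_combination e13 / 3 - ha1
      have haz : ∀ i, a i = 0 := by intro i; fin_cases i <;> assumption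
      intro i
      rw [ha i, haz i, C_0, map_zero]
  exact aux_zero _ δ hleib h1 hX
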